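/- Let n ∈ ℕ, let Λ̃ be the n×n diagonal matrix with diagonal entries Λ̃_{ii} = 2^{−ℓ(i)} for a function ℓ: {1,…,n} → ℕ with Σᵢ 2^{−2ℓ(i)} ≤ 1, and let A be a symmetric n×n matrix satisfying c₁2^{−ℓ(i)} ≤ A_{ii} ≤ c₂2^{−ℓ(i)} and |A_{ii'}| ≤ c₃ 2^{−1.5(ℓ(i)+ℓ(i'))} for i ≠ i', where 0 < c₁ < c₂ and 0 < c₃ < c₁. Then for all x ∈ ℝⁿ: (c₁ − c₃)·xᵀΛ̃x ≤ xᵀAx ≤ 2c₂·xᵀΛ̃x. -/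
import Mathlib


open Real Matrix Finset

theorem almost_diagonal_quadratic_form_equivalence (n : ℕ) (ℓ : Fin n → ℕ)
    (hℓ : ∑ i, (2 : ℝ) ^ (-2 * (ℓ i : ℝ)) ≤ 1)
    (c₁ c₂ c₃ : ℝ) (hc₁ : 0 < c₁) (hc₁₂ : c₁ < c₂) (hc₃ : 0 < c₃) (hc₃₁ : c₃ < c₁)
    (A : Matrix (Fin n) (Fin n) ℝ) (hA : A.IsSymm)
    (hdiag : ∀ i, c₁ * (2 : ℝ) ^ (-(ℓ i : ℝ)) ≤ A i i ∧ A i i ≤ c₂ * (2 : ℝ) ^ (-(ℓ i : ℝ)))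
    (hoff : ∀ i i', i ≠ i' → |A i i'| ≤ c₃ * (2 : ℝ) ^ (-(1.5 : ℝ) * ((ℓ i : ℝ) + (ℓ i' : ℝ)))) :
    ∀ x : Fin n → ℝ,
      (c₁ - c₃) * ∑ i, x i ^ 2 * (2 : ℝ) ^ (-(ℓ i : ℝ)) ≤ x ⬝ᵥ A.mulVec x ∧
      x ⬝ᵥ A.mulVec x ≤ 2 * c₂ * ∑ i, x i ^ 2 * (2 : ℝ) ^ (-(ℓ i : ℝ)) := by
  intro x
  set S : ℝ := ∑ i, x i ^ 2 * (2 : ℝ) ^ (-(ℓ i : ℝ)) with hS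
  have hSnn : 0 ≤ S := Finset.sum_nonneg fun i _ =>
    mul_nonneg (sq_nonneg _) (rpow_nonneg (by norm_num) _)
  set u : Fin n → ℝ := fun i => |x i| * (2 : ℝ) ^ (-(1.5 : ℝ) * (ℓ i : ℝ)) with hu
  have hunn : ∀ i, 0 ≤ u i := fun i =>
    mul_nonneg (abs_nonneg _) (rpow_nonneg (by norm_num) _)
  -- Cauchy-Schwarz step
  have hCS : (∑ i, u i) ^ 2 ≤ S := by
    have key : (∑ i, u i) ^ 2 ≤ S * ∑ i, (2 : ℝ) ^ (-2 * (ℓ i : ℝ)) := by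
      have := Finset.sum_mul_sq_le_sq_mul_sq Finset.univ
        (fun i => |x i| * (2 : ℝ) ^ (-(ℓ i : ℝ) / 2))
        (fun i => (2 : ℝ) ^ (-(ℓ i : ℝ)))
      have e1 : ∀ i : Fin n, (|x i| * (2 : ℝ) ^ (-(ℓ i : ℝ) / 2)) * (2 : ℝ) ^ (-(ℓ i : ℝ)) = u i := by
        intro i
        rw [hu, mul_assoc, ← Real.rpow_add (by norm_num : (0:ℝ) < 2)]
        ring_nf
      have e2 : ∀ i : Fin n, (|x i| * (2 : ℝ) ^ (-(ℓ i : ℝ) / 2)) ^ 2 = x i ^ 2 * (2 : ℝ) ^ (-(ℓ i : ℝ)) := by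
        intro i
        rw [mul_pow, sq_abs, sq ((2:ℝ) ^ (-(ℓ i : ℝ) / 2)),
          ← Real.rpow_add (by norm_num : (0:ℝ) < 2)]
        ring_nf
      have e3 : ∀ i : Fin n, ((2 : ℝ) ^ (-(ℓ i : ℝ))) ^ 2 = (2 : ℝ) ^ (-2 * (ℓ i : ℝ)) := by
        intro i
        rw [sq, ← Real.rpow_add (by norm_num : (0:ℝ) < 2)]
        ring_nf
      simp only [e1, e2, e3] at this
      exact this
    calc (∑ i, u i) ^ 2 ≤ S * ∑ i, (2 : ℝ) ^ (-2 * (ℓ i : ℝ)) := key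
      _ ≤ S * 1 := by exact mul_le_mul_of_nonneg_left hℓ hSnn
      _ = S := mul_one S
  -- quadratic form decomposition
  have hQ : x ⬝ᵥ A.mulVec x =
      (∑ i, x i ^ 2 * A i i) + ∑ i, ∑ j ∈ Finset.univ.erase i, x i * A i j * x j := by
    simp only [dotProduct, Matrix.mulVec, Finset.mul_sum, ← Finset.sum_add_distrib]
    refine Finset.sum_congr rfl fun i _ => ?_
    rw [← Finset.add_sum_erase _ _ (Finset.mem_univ i)]
    congr 1
    · ring
    · exact Finset.sum_congr rfl fun j _ => by ring
  -- off-diagonal bound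
  have hO : |∑ i, ∑ j ∈ Finset.univ.erase i, x i * A i j * x j| ≤ c₃ * S := by
    have step : ∀ i ∈ Finset.univ (α := Fin n), |∑ j ∈ Finset.univ.erase i, x i * A i j * x j|
        ≤ ∑ j ∈ Finset.univ.erase i, c₃ * (u i * u j) := by
      intro i _
      refine (Finset.abs_sum_le_sum_abs _ _).trans (Finset.sum_le_sum fun j hj => ?_)
      have hji : j ≠ i := Finset.ne_of_mem_erase hj
      have hAij := hoff i j (Ne.symm hji)
      have hexp : (2 : ℝ) ^ (-(1.5 : ℝ) * ((ℓ i : ℝ) + (ℓ j : ℝ)))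
          = (2 : ℝ) ^ (-(1.5 : ℝ) * (ℓ i : ℝ)) * (2 : ℝ) ^ (-(1.5 : ℝ) * (ℓ j : ℝ)) := by
        rw [← Real.rpow_add (by norm_num : (0:ℝ) < 2)]
        ring_nf
      calc |x i * A i j * x j| = |x i| * |A i j| * |x j| := by rw [abs_mul, abs_mul]
        _ ≤ |x i| * (c₃ * (2 : ℝ) ^ (-(1.5 : ℝ) * ((ℓ i : ℝ) + (ℓ j : ℝ)))) * |x j| := by
            gcongr
        _ = c₃ * (u i * u j) := by rw [hexp, hu]; ring
    calc |∑ i, ∑ j ∈ Finset.univ.erase i, x i * A i j * x j|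
        ≤ ∑ i, |∑ j ∈ Finset.univ.erase i, x i * A i j * x j| :=
          Finset.abs_sum_le_sum_abs _ _
      _ ≤ ∑ i, ∑ j ∈ Finset.univ.erase i, c₃ * (u i * u j) := Finset.sum_le_sum step
      _ ≤ ∑ i, ∑ j, c₃ * (u i * u j) := by
          refine Finset.sum_le_sum fun i _ => Finset.sum_le_sum_of_subset_of_nonneg
            (Finset.erase_subset _ _) fun j _ _ =>
              mul_nonneg hc₃.le (mul_nonneg (hunn i) (hunn j))
      _ = c₃ * (∑ i, u i) ^ 2 := by
          rw [sq, Finset.sum_mul_sum]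
          rw [Finset.mul_sum]
          exact Finset.sum_congr rfl fun i _ => by rw [Finset.mul_sum]
      _ ≤ c₃ * S := by gcongr
  -- diagonal bounds
  have hD1 : c₁ * S ≤ ∑ i, x i ^ 2 * A i i := by
    rw [hS, Finset.mul_sum]
    refine Finset.sum_le_sum fun i _ => ?_
    have := (hdiag i).1
    calc c₁ * (x i ^ 2 * (2 : ℝ) ^ (-(ℓ i : ℝ))) = x i ^ 2 * (c₁ * (2 : ℝ) ^ (-(ℓ i : ℝ))) := by ring
      _ ≤ x i ^ 2 * A i i := by gcongr
  have hD2 : ∑ i, x i ^ 2 * A i i ≤ c₂ * S := by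
    rw [hS, Finset.mul_sum]
    refine Finset.sum_le_sum fun i _ => ?_
    have := (hdiag i).2
    calc x i ^ 2 * A i i ≤ x i ^ 2 * (c₂ * (2 : ℝ) ^ (-(ℓ i : ℝ))) := by gcongr
      _ = c₂ * (x i ^ 2 * (2 : ℝ) ^ (-(ℓ i : ℝ))) := by ring
  have hOlow := neg_le_of_abs_le hO
  have hOhigh := le_of_abs_le hO
  constructor
  · rw [hQ]; nlinarith
  · rw [hQ]; nlinarith [mul_le_mul_of_nonneg_right hc₁₂.le hSnn, mul_le_mul_of_nonneg_right hc₃₁.le hSnn]
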